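/- For an infinite group G and a vector m = (m_1, ..., m_k) in Z^k: (i) a subset A of G is a Ramsey m-product subset if and only if every infinite subset X of G contains a countably infinite subset Y such that y_1^{m_1} ··· y_k^{m_k} ∈ A for any pairwise distinct elements y_1, ..., y_k of Y; (ii) the family of all Ramsey m-product subsets of G is a filter on G. -/

import Mathlib

open Classical in
/-- Infinite Ramsey theorem: every 2-colouring of the `k`-element subsets of an
infinite set has an infinite monochromatic subset. -/
theorem my_inf_ramsey {α : Type*} :
    ∀ (k : ℕ) (c : Finset α → Bool) (S : Set α), S.Infinite →
      ∃ T, T ⊆ S ∧ T.Infinite ∧ ∃ b, ∀ t : Finset α, ↑t ⊆ T → t.card = k → c t = b := by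
  intro k
  induction k with
  | zero =>
    intro c S hS
    refine ⟨S, le_refl _, hS, c ∅, ?_⟩
    intro t _ ht
    rw [Finset.card_eq_zero] at ht
    rw [ht]
  | succ k ih =>
    intro c S hS
    classical
    have step : ∀ (S : Set α), S.Infinite →
        ∃ (a : α) (T : Set α) (b : Bool), a ∈ S ∧ T ⊆ S ∧ a ∉ T ∧ T.Infinite ∧
          ∀ t : Finset α, ↑t ⊆ T → t.card = k → c (insert a t) = b := by
      intro S hS
      obtain ⟨a, ha⟩ := hS.nonempty
      obtain ⟨T, hTsub, hTinf, b, hmono⟩ :=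
        ih (fun t => c (insert a t)) (S \ {a}) (hS.diff (Set.finite_singleton a))
      exact ⟨a, T, b, ha, fun x hx => (hTsub hx).1, fun h => (hTsub h).2 rfl, hTinf, hmono⟩
    choose a T b hmem hsub hnot hinf hmono using step
    let chain : ℕ → {p : Set α // p.Infinite} :=
      fun n => Nat.rec ⟨S, hS⟩ (fun _ p => ⟨T p.1 p.2, hinf p.1 p.2⟩) n
    let A' : ℕ → α := fun n => a (chain n).1 (chain n).2
    let B' : ℕ → Bool := fun n => b (chain n).1 (chain n).2
    have h1 : ∀ n, (chain (n+1)).1 ⊆ (chain n).1 := fun n => hsub _ _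
    have h2 : ∀ n, A' n ∉ (chain (n+1)).1 := fun n => hnot _ _
    have h3 : ∀ n, A' n ∈ (chain n).1 := fun n => hmem _ _
    have hchain_mono : ∀ n m', n ≤ m' → (chain m').1 ⊆ (chain n).1 := by
      intro n m' h
      induction h with
      | refl => exact le_refl _
      | step h ih' => exact (h1 _).trans ih'
    have hAinj : Function.Injective A' := by
      have key : ∀ n m', n < m' → A' n ≠ A' m' := by
        intro n m' h hEq
        exact h2 n (hEq ▸ hchain_mono (n+1) m' h (h3 m'))
      intro n m' hEq
      rcases lt_trichotomy n m' with h | h | h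
      · exact absurd hEq (key n m' h)
      · exact h
      · exact absurd hEq.symm (key m' n h)
    have hAS : ∀ n, A' n ∈ S := fun n => hchain_mono 0 n (Nat.zero_le n) (h3 n)
    -- pigeonhole on colours
    have hpig : ∃ b₀ : Bool, {n : ℕ | B' n = b₀}.Infinite := by
      by_contra h
      push_neg at h
      have h1f := h true
      have h2f := h false
      have hsubu : (Set.univ : Set ℕ) ⊆ {n | B' n = true} ∪ {n | B' n = false} := by
        intro n _
        cases hb : B' n
        · exact Or.inr hb
        · exact Or.inl hb
      exact Set.infinite_univ ((h1f.union h2f).subset hsubu)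
    obtain ⟨b₀, hN⟩ := hpig
    refine ⟨A' '' {n | B' n = b₀}, ?_, hN.image hAinj.injOn, b₀, ?_⟩
    · rintro x ⟨n, _, rfl⟩; exact hAS n
    · intro t htT htcard
      have htne : t.Nonempty := Finset.card_pos.1 (by omega)
      -- index function
      let idx : α → ℕ := Function.invFun A'
      have hidx : ∀ n, idx (A' n) = n := Function.leftInverse_invFun hAinj
      have hmemt : ∀ x ∈ t, A' (idx x) = x ∧ idx x ∈ {n | B' n = b₀} := by
        intro x hx
        obtain ⟨n, hn, rfl⟩ := htT hx
        rw [hidx]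
        exact ⟨rfl, hn⟩
      let J : Finset ℕ := t.image idx
      have hJne : J.Nonempty := htne.image idx
      let n₀ := J.min' hJne
      have hn₀J : n₀ ∈ J := J.min'_mem hJne
      obtain ⟨x₀, hx₀t, hx₀⟩ := Finset.mem_image.1 hn₀J
      have hAx₀ : A' n₀ = x₀ := by rw [← hx₀]; exact (hmemt x₀ hx₀t).1
      have hAn₀t : A' n₀ ∈ t := hAx₀ ▸ hx₀t
      have hn₀N : B' n₀ = b₀ := by
        have := (hmemt x₀ hx₀t).2
        rwa [hx₀] at this
      let s := t.erase (A' n₀)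
      have hscard : s.card = k := by
        rw [Finset.card_erase_of_mem hAn₀t, htcard]
        omega
      have hsT : (↑s : Set α) ⊆ (chain (n₀+1)).1 := by
        intro x hx
        obtain ⟨hxne, hxt⟩ := Finset.mem_erase.1 hx
        obtain ⟨hAix, hixN⟩ := hmemt x hxt
        have hin : idx x ∈ J := Finset.mem_image_of_mem idx hxt
        have hle : n₀ ≤ idx x := J.min'_le _ hin
        have hne : idx x ≠ n₀ := by
          intro hEq
          exact hxne (by rw [← hAix, hEq])
        have hle1 : n₀ + 1 ≤ idx x := by omega
        have hmemc := h3 (idx x)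
        rw [hAix] at hmemc
        exact hchain_mono (n₀+1) (idx x) hle1 hmemc
      have := hmono (chain n₀).1 (chain n₀).2 s hsT hscard
      rw [Finset.insert_erase hAn₀t] at this
      rw [this]
      exact hn₀N

/-- An infinite set admits an injection from `Fin k`. -/
theorem exists_inj_into {α : Type*} {Y : Set α} (hY : Y.Infinite) (k : ℕ) :
    ∃ x : Fin k → α, (∀ i, x i ∈ Y) ∧ Function.Injective x := by
  haveI := hY.to_subtype
  let e := (Fin.valEmbedding : Fin k ↪ ℕ).trans (Infinite.natEmbedding Y)
  exact ⟨fun i => (e i : α), fun i => (e i).2,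
    fun i j h => e.injective (Subtype.ext h)⟩

/-- An infinite set contains a countably infinite subset. -/
theorem exists_countable_subset {α : Type*} {T : Set α} (hT : T.Infinite) :
    ∃ Y, Y ⊆ T ∧ Y.Countable ∧ Y.Infinite := by
  haveI := hT.to_subtype
  let f := Infinite.natEmbedding T
  refine ⟨Set.range (fun n => (f n : α)), ?_, Set.countable_range _,
    Set.infinite_range_of_injective ?_⟩
  · rintro x ⟨n, rfl⟩; exact (f n).2
  · intro i j h
    exact f.injective (Subtype.ext h)

theorem exists_perm {G : Type*} [DecidableEq G] {k : ℕ} {x y : Fin k → G}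
    (hx : Function.Injective x) (hy : Function.Injective y)
    (h : ∀ i, y i ∈ Finset.univ.image x) :
    ∃ σ : Equiv.Perm (Fin k), ∀ i, x (σ i) = y i := by
  let t := Finset.univ.image x
  have hxt : ∀ i, x i ∈ t := fun i => Finset.mem_image_of_mem x (Finset.mem_univ i)
  let x' : Fin k → t := fun i => ⟨x i, hxt i⟩
  let y' : Fin k → t := fun i => ⟨y i, h i⟩
  have hcard : Fintype.card t = k := by
    rw [Fintype.card_coe, Finset.card_image_of_injective _ hx, Finset.card_univ,
      Fintype.card_fin]
  have hx'b : Function.Bijective x' :=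
    (Fintype.bijective_iff_injective_and_card x').2
      ⟨fun i j hij => hx (congrArg Subtype.val hij), by rw [hcard, Fintype.card_fin]⟩
  have hy'b : Function.Bijective y' :=
    (Fintype.bijective_iff_injective_and_card y').2
      ⟨fun i j hij => hy (congrArg Subtype.val hij), by rw [hcard, Fintype.card_fin]⟩
  refine ⟨(Equiv.ofBijective y' hy'b).trans (Equiv.ofBijective x' hx'b).symm, fun i => ?_⟩
  have : x' ((Equiv.ofBijective x' hx'b).symm (y' i)) = y' i :=
    (Equiv.ofBijective x' hx'b).apply_symm_apply _
  exact congrArg Subtype.val this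

/-- `A` is a Ramsey `m`-product subset of `G` (for `m = (m 0, …, m (k-1)) ∈ ℤ^k`)
if every infinite `X ⊆ G` contains pairwise distinct elements `x 0, …, x (k-1)`
such that `x (σ 0) ^ m 0 * x (σ 1) ^ m 1 * ⋯ * x (σ (k-1)) ^ m (k-1) ∈ A` for
every permutation `σ` of `Fin k`. -/
def IsRamseyProdSub {G : Type*} [Group G] {k : ℕ} (m : Fin k → ℤ) (A : Set G) : Prop :=
  ∀ X : Set G, X.Infinite →
    ∃ x : Fin k → G, (∀ i, x i ∈ X) ∧ Function.Injective x ∧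
      ∀ σ : Equiv.Perm (Fin k), (List.ofFn fun i => x (σ i) ^ m i).prod ∈ A

theorem ramsey_iff {G : Type*} [Group G] {k : ℕ} (m : Fin k → ℤ) (A : Set G) :
    IsRamseyProdSub m A ↔
      ∀ X : Set G, X.Infinite →
        ∃ Y : Set G, Y ⊆ X ∧ Y.Countable ∧ Y.Infinite ∧
          ∀ y : Fin k → G, (∀ i, y i ∈ Y) → Function.Injective y →
            (List.ofFn fun i => y i ^ m i).prod ∈ A := by
  classical
  constructor
  · intro hA X hX
    set c : Finset G → Bool := fun t => decide (∀ y : Fin k → G,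
      (∀ i, y i ∈ (t : Set G)) → Function.Injective y →
        (List.ofFn fun i => y i ^ m i).prod ∈ A) with hc
    obtain ⟨T, hTX, hTinf, b, hmono⟩ := my_inf_ramsey k c X hX
    -- the colour is `true`
    obtain ⟨x, hxT, hxinj, hxσ⟩ := hA T hTinf
    have hcardx : (Finset.univ.image x).card = k := by
      rw [Finset.card_image_of_injective _ hxinj, Finset.card_univ, Fintype.card_fin]
    have htsx : (↑(Finset.univ.image x) : Set G) ⊆ T := by
      intro g hg
      obtain ⟨i, _, rfl⟩ := Finset.mem_image.1 hg
      exact hxT i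
    have hct : c (Finset.univ.image x) = true := by
      rw [hc]
      apply decide_eq_true
      intro y hy hyinj
      obtain ⟨σ, hσ⟩ := exists_perm hxinj hyinj (fun i => hy i)
      have := hxσ σ
      have hl : (List.ofFn fun i => y i ^ m i) = (List.ofFn fun i => x (σ i) ^ m i) := by
        congr 1
        funext i
        rw [hσ]
      rw [hl]
      exact this
    have hb : b = true := by
      have := hmono (Finset.univ.image x) htsx hcardx
      rw [hct] at this
      exact this.symm
    obtain ⟨Y, hYT, hYc, hYinf⟩ := exists_countable_subset hTinf
    refine ⟨Y, hYT.trans hTX, hYc, hYinf, ?_⟩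
    intro y hy hyinj
    have hcardy : (Finset.univ.image y).card = k := by
      rw [Finset.card_image_of_injective _ hyinj, Finset.card_univ, Fintype.card_fin]
    have htsy : (↑(Finset.univ.image y) : Set G) ⊆ T := by
      intro g hg
      obtain ⟨i, _, rfl⟩ := Finset.mem_image.1 hg
      exact hYT (hy i)
    have hcy : c (Finset.univ.image y) = true := by
      rw [hmono (Finset.univ.image y) htsy hcardy, hb]
    have := of_decide_eq_true hcy
    exact this y (fun i => Finset.mem_image_of_mem y (Finset.mem_univ i)) hyinj
  · intro h X hX
    obtain ⟨Y, hYX, _, hYinf, hmem⟩ := h X hX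
    obtain ⟨x, hxY, hxinj⟩ := exists_inj_into hYinf k
    exact ⟨x, fun i => hYX (hxY i), hxinj,
      fun σ => hmem (x ∘ σ) (fun i => hxY _) (hxinj.comp σ.injective)⟩

theorem ramseyProd_iff_countable_and_isFilter
    {G : Type*} [Group G] [Infinite G] {k : ℕ} (hk : 0 < k) (m : Fin k → ℤ) :
    (∀ A : Set G, IsRamseyProdSub m A ↔
      ∀ X : Set G, X.Infinite →
        ∃ Y : Set G, Y ⊆ X ∧ Y.Countable ∧ Y.Infinite ∧
          ∀ y : Fin k → G, (∀ i, y i ∈ Y) → Function.Injective y →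
            (List.ofFn fun i => y i ^ m i).prod ∈ A) ∧
    (∃ f : Filter G, f.NeBot ∧ ∀ A : Set G, A ∈ f ↔ IsRamseyProdSub m A) := by
  refine ⟨fun A => ramsey_iff m A, ?_⟩
  have huniv : IsRamseyProdSub m (Set.univ : Set G) := by
    intro X hX
    obtain ⟨x, hx, hinj⟩ := exists_inj_into hX k
    exact ⟨x, hx, hinj, fun σ => Set.mem_univ _⟩
  have hmono : ∀ A B : Set G, IsRamseyProdSub m A → A ⊆ B → IsRamseyProdSub m B := by
    intro A B hA hAB X hX
    obtain ⟨x, hx1, hx2, hx3⟩ := hA X hX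
    exact ⟨x, hx1, hx2, fun σ => hAB (hx3 σ)⟩
  have hinter : ∀ A B : Set G, IsRamseyProdSub m A → IsRamseyProdSub m B →
      IsRamseyProdSub m (A ∩ B) := by
    intro A B hA hB
    rw [ramsey_iff]
    intro X hX
    obtain ⟨YA, hYAX, _, hYAinf, hmemA⟩ := (ramsey_iff m A).1 hA X hX
    obtain ⟨YB, hYBA, hYBc, hYBinf, hmemB⟩ := (ramsey_iff m B).1 hB YA hYAinf
    refine ⟨YB, hYBA.trans hYAX, hYBc, hYBinf, ?_⟩
    intro y hy hyinj
    exact ⟨hmemA y (fun i => hYBA (hy i)) hyinj, hmemB y hy hyinj⟩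
  refine ⟨⟨{A | IsRamseyProdSub m A}, huniv, fun hA hAB => hmono _ _ hA hAB,
    fun hA hB => hinter _ _ hA hB⟩, ?_, fun A => Iff.rfl⟩
  constructor
  intro hbot
  have hE : IsRamseyProdSub m (∅ : Set G) := by
    have : (∅ : Set G) ∈ (⊥ : Filter G) := Filter.mem_bot
    rw [← hbot] at this
    exact this
  obtain ⟨x, _, _, hσ⟩ := hE (Set.univ : Set G) Set.infinite_univ
  exact (hσ 1).elim
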